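/- In the Laurent polynomial ring ℤ[u^{±1}, v^{±1}] in two variables over ℤ, every common divisor of the two elements 1−uv and 1−u is a unit; yet under the ring homomorphism ρ : ℤ[u^{±1}, v^{±1}] → ℤ[w^{±1}] determined by u ↦ w and v ↦ 1, both elements are sent to 1−w, which is not a unit of ℤ[w^{±1}]. Hence the greatest common divisor of {1−uv, 1−u} is 1 while the greatest common divisor of their images is 1−w, so the image under ρ of the gcd is a proper divisor of the gcd of the images. -/

import Mathlib

open LaurentPolynomial

/-- The two-variable Laurent polynomial ring `ℤ[u^{±1}, v^{±1}]`. -/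
noncomputable abbrev LaurentTwo : Type := AddMonoidAlgebra ℤ (ℤ × ℤ)

/-- The variable `u` of `ℤ[u^{±1}, v^{±1}]`. -/
noncomputable def uVar : LaurentTwo := AddMonoidAlgebra.single ((1 : ℤ), (0 : ℤ)) (1 : ℤ)

/-- The variable `v` of `ℤ[u^{±1}, v^{±1}]`. -/
noncomputable def vVar : LaurentTwo := AddMonoidAlgebra.single ((0 : ℤ), (1 : ℤ)) (1 : ℤ)

/-- The reduction `ρ : ℤ[u^{±1}, v^{±1}] → ℤ[w^{±1}]`, `u ↦ w`, `v ↦ 1`. -/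
noncomputable def rho : LaurentTwo →+* LaurentPolynomial ℤ :=
  AddMonoidAlgebra.mapDomainRingHom ℤ (AddMonoidHom.fst ℤ ℤ)

section Aux

open Finsupp

/-- A key fact: if `φ` is a monotone additive character vanishing on the support of a
product `d * e` in a monoid algebra over a linearly ordered cancellative monoid, then
`φ` is constant on the support of `d`. -/
lemma coord_const_aux {G : Type*} [AddCommMonoid G] [LinearOrder G] [IsOrderedCancelAddMonoid G]
    {d e : AddMonoidAlgebra ℤ G} (hd : d ≠ 0) (he : e ≠ 0)
    (φ : G →+ ℤ) (hφ : Monotone φ)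
    (hg : ∀ x ∈ (d * e).coeff.support, φ x = 0) :
    ∀ x ∈ d.coeff.support, ∀ y ∈ d.coeff.support, φ x = φ y := by
  have hd' : d.coeff.support.Nonempty := Finsupp.support_nonempty_iff.2 (mt AddMonoidAlgebra.coeff_eq_zero.1 hd)
  have he' : e.coeff.support.Nonempty := Finsupp.support_nonempty_iff.2 (mt AddMonoidAlgebra.coeff_eq_zero.1 he)
  set M := d.coeff.support.max' hd' with hM
  set m := d.coeff.support.min' hd' with hm
  set M' := e.coeff.support.max' he' with hM'
  set m' := e.coeff.support.min' he' with hm'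
  have huMax : UniqueAdd d.coeff.support e.coeff.support M M' := by
    intro a b ha hb hab
    have h1 : a ≤ M := Finset.le_max' _ _ ha
    have h2 : b ≤ M' := Finset.le_max' _ _ hb
    rcases h1.lt_or_eq with h1' | h1'
    · exact absurd hab (by exact ne_of_lt (add_lt_add_of_lt_of_le h1' h2))
    · refine ⟨h1', ?_⟩
      rw [h1'] at hab
      exact add_left_cancel hab
  have huMin : UniqueAdd d.coeff.support e.coeff.support m m' := by
    intro a b ha hb hab
    have h1 : m ≤ a := Finset.min'_le _ _ ha
    have h2 : m' ≤ b := Finset.min'_le _ _ hb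
    rcases h1.lt_or_eq with h1' | h1'
    · exact absurd hab (by exact ne_of_gt (add_lt_add_of_lt_of_le h1' h2))
    · refine ⟨h1'.symm, ?_⟩
      rw [← h1'] at hab
      exact add_left_cancel hab
  have hMmem : M + M' ∈ (d * e).coeff.support := by
    rw [Finsupp.mem_support_iff,
      AddMonoidAlgebra.coeff_mul_add_of_uniqueAdd huMax]
    exact mul_ne_zero (Finsupp.mem_support_iff.1 (d.coeff.support.max'_mem hd'))
      (Finsupp.mem_support_iff.1 (e.coeff.support.max'_mem he'))
  have hmmem : m + m' ∈ (d * e).coeff.support := by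
    rw [Finsupp.mem_support_iff,
      AddMonoidAlgebra.coeff_mul_add_of_uniqueAdd huMin]
    exact mul_ne_zero (Finsupp.mem_support_iff.1 (d.coeff.support.min'_mem hd'))
      (Finsupp.mem_support_iff.1 (e.coeff.support.min'_mem he'))
  have hEqM : φ M + φ M' = 0 := by
    have := hg _ hMmem; rwa [map_add] at this
  have hEqm : φ m + φ m' = 0 := by
    have := hg _ hmmem; rwa [map_add] at this
  have hmM : φ m ≤ φ M := hφ (d.coeff.support.min'_le _ (d.coeff.support.max'_mem hd'))
  have hmM' : φ m' ≤ φ M' := hφ (e.coeff.support.min'_le _ (e.coeff.support.max'_mem he'))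
  have hconst : φ m = φ M := by omega
  intro x hx y hy
  have hx1 : φ x ≤ φ M := hφ (Finset.le_max' _ _ hx)
  have hx2 : φ m ≤ φ x := hφ (Finset.min'_le _ _ hx)
  have hy1 : φ y ≤ φ M := hφ (Finset.le_max' _ _ hy)
  have hy2 : φ m ≤ φ y := hφ (Finset.min'_le _ _ hy)
  omega

end Aux

/-- Every common divisor of `1 - uv` and `1 - u` in `ℤ[u^{±1}, v^{±1}]` is a unit
(so their gcd is `1`), yet `ρ` sends both to `1 - w`, which is not a unit of
`ℤ[w^{±1}]` (so the gcd of the images is `1 - w`): the image of the gcd is a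
proper divisor of the gcd of the images. -/
theorem rho_gcd_not_preserved :
    (∀ d : LaurentTwo, d ∣ (1 - uVar * vVar) → d ∣ (1 - uVar) → IsUnit d) ∧
    rho (1 - uVar * vVar) = 1 - T 1 ∧
    rho (1 - uVar) = 1 - T 1 ∧
    ¬ IsUnit (1 - T 1 : LaurentPolynomial ℤ) := by
  classical
  refine ⟨?_, ?_, ?_, ?_⟩
  · -- every common divisor is a unit
    intro d h1 h2
    -- `d` also divides `1 - v`
    have h3 : d ∣ (1 - vVar) := by
      have hident : (1 : LaurentTwo) - vVar = (1 - uVar * vVar) - vVar * (1 - uVar) := by ring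
      rw [hident]
      exact dvd_sub h1 (h2.mul_left vVar)
    -- basic nonvanishing facts
    have hone : (1 : LaurentTwo).coeff = Finsupp.single 0 1 := rfl
    have hv00 : ((1 : LaurentTwo) - vVar).coeff ((0, 0) : ℤ × ℤ) = 1 := by
      rw [AddMonoidAlgebra.coeff_sub, Finsupp.sub_apply, hone]
      simp [vVar, AddMonoidAlgebra.coeff_single, Finsupp.single_apply, Prod.ext_iff]
    have hu00 : ((1 : LaurentTwo) - uVar).coeff ((0, 0) : ℤ × ℤ) = 1 := by
      rw [AddMonoidAlgebra.coeff_sub, Finsupp.sub_apply, hone]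
      simp [uVar, AddMonoidAlgebra.coeff_single, Finsupp.single_apply, Prod.ext_iff]
    have hvne : (1 : LaurentTwo) - vVar ≠ 0 := by
      intro h0
      rw [h0] at hv00
      simp at hv00
    have hune : (1 : LaurentTwo) - uVar ≠ 0 := by
      intro h0
      rw [h0] at hu00
      simp at hu00
    obtain ⟨e, he⟩ := h3
    obtain ⟨f, hf⟩ := h2
    have hd0 : d ≠ 0 := by rintro rfl; rw [zero_mul] at he; exact hvne he
    have he0 : e ≠ 0 := by rintro rfl; rw [mul_zero] at he; exact hvne he
    have hf0 : f ≠ 0 := by rintro rfl; rw [mul_zero] at hf; exact hune hf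
    -- the two lex embeddings
    let e1 : (ℤ × ℤ) →+ Lex (ℤ × ℤ) := AddMonoidHom.mk' (fun x => toLex x) (fun _ _ => rfl)
    let e2 : (ℤ × ℤ) →+ Lex (ℤ × ℤ) :=
      AddMonoidHom.mk' (fun x => toLex (x.2, x.1)) (fun _ _ => rfl)
    have he1inj : Function.Injective e1 := toLex.injective
    have he2inj : Function.Injective e2 := by
      intro a b hab
      have := toLex.injective hab
      exact Prod.ext (congrArg Prod.snd this) (congrArg Prod.fst this)
    let F1 : LaurentTwo →+* AddMonoidAlgebra ℤ (Lex (ℤ × ℤ)) :=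
      AddMonoidAlgebra.mapDomainRingHom ℤ e1
    let F2 : LaurentTwo →+* AddMonoidAlgebra ℤ (Lex (ℤ × ℤ)) :=
      AddMonoidAlgebra.mapDomainRingHom ℤ e2
    have hF1inj : Function.Injective F1 := AddMonoidAlgebra.mapDomain_injective he1inj
    have hF2inj : Function.Injective F2 := AddMonoidAlgebra.mapDomain_injective he2inj
    -- the monotone character on Lex (ℤ × ℤ)
    let φ : Lex (ℤ × ℤ) →+ ℤ := AddMonoidHom.mk' (fun x => (ofLex x).1) (fun _ _ => rfl)
    have hφ : Monotone φ := by
      intro a b hab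
      rcases Prod.Lex.le_iff.1 hab with h | h
      · exact le_of_lt h
      · exact le_of_eq h.1
    -- supports of F (single a r) etc.
    have hF1single : ∀ (a : ℤ × ℤ) (r : ℤ), F1 (AddMonoidAlgebra.single a r)
        = AddMonoidAlgebra.single (e1 a) r := fun a r => AddMonoidAlgebra.mapDomain_single
    have hF2single : ∀ (a : ℤ × ℤ) (r : ℤ), F2 (AddMonoidAlgebra.single a r)
        = AddMonoidAlgebra.single (e2 a) r := fun a r => AddMonoidAlgebra.mapDomain_single
    -- apply the key lemma along F1 (to 1 - v) and F2 (to 1 - u)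
    have himg1 : F1 d * F1 e = 1 - AddMonoidAlgebra.single (toLex ((0 : ℤ), (1 : ℤ))) 1 := by
      rw [← map_mul, ← he, map_sub, map_one, vVar, hF1single]
      rfl
    have himg2 : F2 d * F2 f = 1 - AddMonoidAlgebra.single (toLex ((0 : ℤ), (1 : ℤ))) 1 := by
      rw [← map_mul, ← hf, map_sub, map_one, uVar, hF2single]
      rfl
    have hsupp : ∀ x ∈ ((1 : AddMonoidAlgebra ℤ (Lex (ℤ × ℤ)))
        - AddMonoidAlgebra.single (toLex ((0 : ℤ), (1 : ℤ))) 1).coeff.support, φ x = 0 := by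
      intro x hx
      rw [AddMonoidAlgebra.coeff_sub] at hx
      have hx' := Finsupp.support_sub hx
      rcases Finset.mem_union.1 hx' with hx1 | hx1
      · rw [AddMonoidAlgebra.one_def, AddMonoidAlgebra.coeff_single] at hx1
        have : x ∈ ({(0 : Lex (ℤ × ℤ))} : Finset _) := Finsupp.support_single_subset hx1
        rw [Finset.mem_singleton] at this
        rw [this, map_zero]
      · rw [AddMonoidAlgebra.coeff_single] at hx1
        have : x ∈ ({toLex ((0 : ℤ), (1 : ℤ))} : Finset _) :=
          Finsupp.support_single_subset hx1
        rw [Finset.mem_singleton] at this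
        rw [this]
        rfl
    have hF1d0 : F1 d ≠ 0 := fun h0 => hd0 (hF1inj (by rw [h0, map_zero]))
    have hF1e0 : F1 e ≠ 0 := fun h0 => he0 (hF1inj (by rw [h0, map_zero]))
    have hF2d0 : F2 d ≠ 0 := fun h0 => hd0 (hF2inj (by rw [h0, map_zero]))
    have hF2f0 : F2 f ≠ 0 := fun h0 => hf0 (hF2inj (by rw [h0, map_zero]))
    have hc1 := coord_const_aux hF1d0 hF1e0 φ hφ (by rw [himg1]; exact hsupp)
    have hc2 := coord_const_aux hF2d0 hF2f0 φ hφ (by rw [himg2]; exact hsupp)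
    -- supports map forward
    have hsup1 : (F1 d).coeff.support = d.coeff.support.image e1 :=
      Finsupp.mapDomain_support_of_injective he1inj d.coeff
    have hsup2 : (F2 d).coeff.support = d.coeff.support.image e2 :=
      Finsupp.mapDomain_support_of_injective he2inj d.coeff
    -- hence the support of d is a singleton
    have hd' : d.coeff.support.Nonempty := Finsupp.support_nonempty_iff.2 (mt AddMonoidAlgebra.coeff_eq_zero.1 hd0)
    obtain ⟨c, hc⟩ := hd'
    have hsub : d.coeff.support ⊆ {c} := by
      intro x hx
      have hx1 : e1 x ∈ (F1 d).coeff.support := by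
        rw [hsup1]; exact Finset.mem_image_of_mem _ hx
      have hxc1 : e1 c ∈ (F1 d).coeff.support := by
        rw [hsup1]; exact Finset.mem_image_of_mem _ hc
      have hx2 : e2 x ∈ (F2 d).coeff.support := by
        rw [hsup2]; exact Finset.mem_image_of_mem _ hx
      have hxc2 : e2 c ∈ (F2 d).coeff.support := by
        rw [hsup2]; exact Finset.mem_image_of_mem _ hc
      have h1 : x.1 = c.1 := hc1 _ hx1 _ hxc1
      have h2 : x.2 = c.2 := hc2 _ hx2 _ hxc2
      rw [Finset.mem_singleton]
      exact Prod.ext h1 h2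
    have hdsingle : d = AddMonoidAlgebra.single c (d.coeff c) :=
      AddMonoidAlgebra.coeff_injective (Finsupp.eq_single_iff.2 ⟨hsub, rfl⟩)
    -- extract the unit
    have hkey : d.coeff c * f.coeff (-c) = 1 := by
      have h00 : (d * f).coeff ((0 : ℤ × ℤ)) = 1 := by rw [← hf]; exact hu00
      rw [hdsingle, AddMonoidAlgebra.coeff_single_mul_apply f (d.coeff c) c 0, add_zero] at h00
      exact h00
    refine IsUnit.of_mul_eq_one (a := d) (AddMonoidAlgebra.single (-c) (f.coeff (-c))) ?_
    rw [hdsingle, AddMonoidAlgebra.single_mul_single, add_neg_cancel, hkey]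
    rfl
  · -- rho (1 - uv) = 1 - T 1
    have : uVar * vVar = AddMonoidAlgebra.single ((1 : ℤ), (1 : ℤ)) 1 := by
      rw [uVar, vVar, AddMonoidAlgebra.single_mul_single]
      norm_num
    rw [map_sub, map_one, this]
    have : rho (AddMonoidAlgebra.single ((1 : ℤ), (1 : ℤ)) 1)
        = AddMonoidAlgebra.single (1 : ℤ) (1 : ℤ) := AddMonoidAlgebra.mapDomain_single
    rw [this]
    rfl
  · -- rho (1 - u) = 1 - T 1
    rw [map_sub, map_one, uVar]
    have : rho (AddMonoidAlgebra.single ((1 : ℤ), (0 : ℤ)) 1)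
        = AddMonoidAlgebra.single (1 : ℤ) (1 : ℤ) := AddMonoidAlgebra.mapDomain_single
    rw [this]
    rfl
  · -- 1 - T 1 is not a unit
    intro h
    let ε : LaurentPolynomial ℤ →+* LaurentPolynomial ℤ :=
      AddMonoidAlgebra.mapDomainRingHom ℤ (0 : ℤ →+ ℤ)
    have hT : ε (T 1) = 1 := by
      have : (T 1 : LaurentPolynomial ℤ) = AddMonoidAlgebra.single (1 : ℤ) (1 : ℤ) := rfl
      rw [this]
      have : ε (AddMonoidAlgebra.single (1 : ℤ) (1 : ℤ))
          = AddMonoidAlgebra.single (0 : ℤ) (1 : ℤ) := AddMonoidAlgebra.mapDomain_single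
      rw [this]
      rfl
    have h0 : ε (1 - T 1) = 0 := by rw [map_sub, map_one, hT, sub_self]
    have := h.map ε
    rw [h0] at this
    exact not_isUnit_zero this
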